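/- Let 𝔤 be a finite-dimensional real Lie algebra whose Killing form B is nondegenerate, let ω be a 2-cocycle on 𝔤, and let F : 𝔤 → 𝔤 be the unique linear endomorphism satisfying B(F(X),Y) = ω(X,Y) for all X,Y ∈ 𝔤. Then F is a derivation of 𝔤, i.e. F([X,Y]) = [F(X),Y] + [X,F(Y)] for all X,Y ∈ 𝔤. -/

import Mathlib

/-- If `𝔤` is a finite-dimensional real Lie algebra with nondegenerate Killing form `B`,
`ω` a 2-cocycle on `𝔤`, and `F : 𝔤 → 𝔤` the linear endomorphism with
`B (F X) Y = ω X Y`, then `F` is a derivation of `𝔤`. -/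
theorem stmt_2 (L : Type*) [LieRing L] [LieAlgebra ℝ L] [FiniteDimensional ℝ L]
    (hB : (killingForm ℝ L).Nondegenerate)
    (ω : L →ₗ[ℝ] L →ₗ[ℝ] ℝ)
    (halt : ∀ X : L, ω X X = 0)
    (hcoc : ∀ X Y W : L, ω ⁅X, Y⁆ W + ω ⁅Y, W⁆ X + ω ⁅W, X⁆ Y = 0)
    (F : L →ₗ[ℝ] L)
    (hF : ∀ X Y : L, killingForm ℝ L (F X) Y = ω X Y) :
    ∀ X Y : L, F ⁅X, Y⁆ = ⁅F X, Y⁆ + ⁅X, F Y⁆ := by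
  have hskew : ∀ X Y : L, ω X Y = - ω Y X := by
    intro X Y
    have h := halt (X + Y)
    simp only [map_add, LinearMap.add_apply, halt] at h
    linarith
  intro X Y
  rw [← sub_eq_zero]
  apply hB.1
  intro W
  rw [map_sub, LinearMap.sub_apply, sub_eq_zero]
  have h1 : killingForm ℝ L ⁅F X, Y⁆ W = ω X ⁅Y, W⁆ := by
    rw [LieModule.traceForm_apply_lie_apply, hF]
  have h2 : killingForm ℝ L ⁅X, F Y⁆ W = - ω Y ⁅X, W⁆ := by
    rw [← lie_skew X (F Y), map_neg, LinearMap.neg_apply,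
      LieModule.traceForm_apply_lie_apply, hF]
  have h3 := hcoc X Y W
  have h4 : ω ⁅Y, W⁆ X = - ω X ⁅Y, W⁆ := hskew _ _
  have h5 : ω ⁅W, X⁆ Y = ω Y ⁅X, W⁆ := by
    rw [← lie_skew X W, map_neg]; exact hskew _ _
  rw [map_add, LinearMap.add_apply, hF, h1, h2]
  linarith
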